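/- arXiv:2103.12229 — 10 statements merged into one kernel-verified Lean document; each statement's English description precedes it below -/
import Mathlib

section
/- Fix δ ≥ 0 and consider U_δ(q) = q/(q+1)^{δ+1} - c·q with 0 < c < 1. At any critical point q* > 0 of U_δ (i.e., where (1 - q*δ)/(q*+1)^{δ+2} = c), we have q*·δ < 1, and the mixed partial derivative ∂²U/∂q∂δ = (-q + (qδ-1)·ln(q+1))/(q+1)^{δ+2} is negative at q*. -/
/-- At any critical point `q* > 0` of `U_δ q = q/(q+1)^(δ+1) - c*q` (with
`0 < c < 1`, `δ ≥ 0`), i.e. where `(1 - q*δ)/(q*+1)^(δ+2) = c`, we have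
`q*·δ < 1` and the mixed partial `(-q + (qδ-1)·ln(q+1))/(q+1)^(δ+2)` is
negative at `q*`. -/
theorem happy_mine_mixed_partial_neg (δ c q : ℝ) (hδ : 0 ≤ δ)
    (hc0 : 0 < c) (hc1 : c < 1) (hq : 0 < q)
    (hcrit : (1 - q * δ) / (q + 1) ^ (δ + 2) = c) :
    q * δ < 1 ∧
      (-q + (q * δ - 1) * Real.log (q + 1)) / (q + 1) ^ (δ + 2) < 0 := by
  have hpos : (0:ℝ) < (q + 1) ^ (δ + 2) := Real.rpow_pos_of_pos (by linarith) _
  have hnum : 0 < 1 - q * δ := by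
    by_contra h
    push_neg at h
    have : (1 - q * δ) / (q + 1) ^ (δ + 2) ≤ 0 := div_nonpos_iff.mpr <| Or.inr ⟨h, le_of_lt hpos⟩
    linarith [hcrit ▸ this]
  refine ⟨by linarith, ?_⟩
  have hlog : 0 < Real.log (q + 1) := Real.log_pos (by linarith)
  have : (q * δ - 1) * Real.log (q + 1) < 0 := mul_neg_of_neg_of_pos (by linarith) hlog
  exact div_neg_of_neg_of_pos (by linarith) hpos
end

section
/- Let c₁ ≤ c₂ be positive reals with c₁ + c₂ > 1. Then the strategy profile q_i = (1/(c₁+c₂))·(1 - c_i/(c₁+c₂)) for i = 1,2 satisfies q₁ + q₂ = 1/(c₁+c₂) < 1, each q_i ≥ 0, and each miner's utility derivative ∂U_i/∂q_i = (q₁+q₂-q_i)/(q₁+q₂)² - c_i equals zero whenever q_i > 0. -/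
/-- For two miners with costs `0 < c₁ ≤ c₂` and `c₁ + c₂ > 1`, the profile
`qᵢ = (1/(c₁+c₂))·(1 - cᵢ/(c₁+c₂))` has total hashrate `1/(c₁+c₂) < 1`,
nonnegative hashrates, and the utility derivatives vanish at any positive
hashrate. -/
theorem two_miner_interior_equilibrium (c₁ c₂ : ℝ) (h1 : 0 < c₁) (h12 : c₁ ≤ c₂)
    (hsum : 1 < c₁ + c₂)
    (q₁ q₂ : ℝ)
    (hq₁ : q₁ = (1 / (c₁ + c₂)) * (1 - c₁ / (c₁ + c₂)))
    (hq₂ : q₂ = (1 / (c₁ + c₂)) * (1 - c₂ / (c₁ + c₂))) :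
    q₁ + q₂ = 1 / (c₁ + c₂) ∧ 1 / (c₁ + c₂) < 1 ∧ 0 ≤ q₁ ∧ 0 ≤ q₂ ∧
      (0 < q₁ → (q₁ + q₂ - q₁) / (q₁ + q₂) ^ 2 - c₁ = 0) ∧
      (0 < q₂ → (q₁ + q₂ - q₂) / (q₁ + q₂) ^ 2 - c₂ = 0) := by
  have hs : (0:ℝ) < c₁ + c₂ := lt_trans one_pos hsum
  have hs0 : c₁ + c₂ ≠ 0 := ne_of_gt hs
  have htot : q₁ + q₂ = 1 / (c₁ + c₂) := by
    rw [hq₁, hq₂]; field_simp; ring_nf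
  refine ⟨htot, ?_, ?_, ?_, ?_, ?_⟩
  · rw [div_lt_one hs]; exact hsum
  · rw [hq₁]
    apply mul_nonneg (by positivity)
    have : c₁ / (c₁ + c₂) ≤ 1 := by
      rw [div_le_one hs]; linarith
    linarith
  · rw [hq₂]
    apply mul_nonneg (by positivity)
    have : c₂ / (c₁ + c₂) ≤ 1 := by
      rw [div_le_one hs]; linarith
    linarith
  · intro _
    subst hq₁ hq₂
    rw [htot]
    field_simp
    ring
  · intro _
    subst hq₁ hq₂
    rw [htot]
    field_simp
    ring
end

section
/- Let c₁ ≤ c₂ with c₁ + c₂ ≤ 1 and c₁, c₂ > 0. For any α, β ≥ 0 with α + β = 1, (1-c₁)/2 ≤ α ≤ 1-c₁, and (1-c₂)/2 ≤ β ≤ 1-c₂, the profile (α, β) is a Nash equilibrium of the two-miner HaPPY-Mine game with Q = δ = 1; moreover any equilibrium with total hashrate 1 satisfies these bounds. -/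
/-- Utility of a miner with cost `c` and hashrate `x`, the other miner having
hashrate `y`, in the two-miner HaPPY-Mine game with `Q = δ = 1`. -/
noncomputable def happyUtil2 (c x y : ℝ) : ℝ :=
  if x + y ≤ 1 then x / (x + y) - c * x else x / (x + y) ^ 2 - c * x

lemma util_at_eq (c β : ℝ) (hβ : β ≤ 1) :
    happyUtil2 c (1 - β) β = (1 - β) * (1 - c) := by
  unfold happyUtil2
  rw [if_pos (by linarith : (1:ℝ) - β + β ≤ 1)]
  have h : (1 : ℝ) - β + β = 1 := by ring
  rw [h]
  ring

lemma best_resp (c β : ℝ) (hc : 0 < c) (hcβ : c ≤ β) (hβc : 2 * β - 1 ≤ c) (hβ1 : β ≤ 1) :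
    ∀ x : ℝ, 0 ≤ x → happyUtil2 c x β ≤ happyUtil2 c (1 - β) β := by
  intro x hx
  rw [util_at_eq c β hβ1]
  have hβ0 : 0 < β := lt_of_lt_of_le hc hcβ
  have hs0 : 0 < x + β := by linarith
  unfold happyUtil2
  split_ifs with h
  · rw [sub_le_iff_le_add, div_le_iff₀ hs0]
    have hcb : c * (x + β) ≤ β := by nlinarith
    nlinarith [mul_nonneg (sub_nonneg.2 h) (sub_nonneg.2 hcb)]
  · push_neg at h
    have h1 : (0:ℝ) ≤ x + β - 1 := by linarith
    rw [sub_le_iff_le_add, div_le_iff₀ (by positivity : (0:ℝ) < (x+β)^2)]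
    nlinarith [mul_nonneg h1 (show (0:ℝ) ≤ c + 1 - 2*β by linarith),
               mul_nonneg (mul_nonneg (mul_nonneg h1 h1) h1) hc.le,
               mul_nonneg (mul_nonneg h1 h1) (show (0:ℝ) ≤ 2*c + 1 - β by linarith)]

lemma nec (c α β : ℝ) (hc : 0 < c) (hc1 : c < 1) (hα : 0 ≤ α) (hβ : 0 ≤ β)
    (hab : α + β = 1)
    (hne : ∀ x : ℝ, 0 ≤ x → happyUtil2 c x β ≤ happyUtil2 c α β) :
    (1 - c) / 2 ≤ α ∧ α ≤ 1 - c := by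
  have hβ1 : β ≤ 1 := by linarith
  have hαβ : α = 1 - β := by linarith
  have huα : happyUtil2 c α β = (1 - β) * (1 - c) := by
    rw [hαβ]; exact util_at_eq c β hβ1
  constructor
  · -- α ≥ (1-c)/2, i.e. 2β ≤ 1 + c
    by_contra hcon
    push_neg at hcon
    have hq : 1 + c < 2 * β := by linarith
    set δ : ℝ := (2*β - 1 - c) / (2*c + 2) with hδdef
    have hd0 : (0:ℝ) < 2*c + 2 := by linarith
    have hδ0 : 0 < δ := by apply div_pos (by linarith) hd0
    have hδval : (2*c + 2) * δ = 2*β - 1 - c := by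
      rw [hδdef]; field_simp
    set x : ℝ := 1 + δ - β with hxdef
    have hx : 0 ≤ x := by rw [hxdef]; linarith
    have hxb : x + β = 1 + δ := by rw [hxdef]; ring
    have key := hne x hx
    rw [huα] at key
    unfold happyUtil2 at key
    rw [if_neg (by rw [hxb]; push_neg; linarith), hxb] at key
    have key2 : x ≤ ((1-β)*(1-c) + c*x) * (1+δ)^2 := by
      rw [← div_le_iff₀ (by positivity : (0:ℝ) < (1+δ)^2)] at *
      linarith
    have e : ((1-β)*(1-c) + c*x) * (1+δ)^2 - x
        = δ * ((c + 1 - 2*β) + δ*(2*c + 1 - β) + c*δ^2) := by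
      rw [hxdef]; ring
    have hcδ : c * δ < 1 + β := by
      have h1 : c * δ ≥ 0 := mul_nonneg hc.le hδ0.le
      have h2 : c * δ < 1 * δ := by
        exact mul_lt_mul_of_pos_right hc1 hδ0
      nlinarith [hδval]
    have hinner : (c + 1 - 2*β) + δ*(2*c + 1 - β) + c*δ^2 < 0 := by
      nlinarith [mul_pos hδ0 (show (0:ℝ) < 1 + β - c*δ by linarith)]
    nlinarith [mul_neg_of_pos_of_neg hδ0 hinner]
  · -- α ≤ 1 - c, i.e. c ≤ β
    by_contra hcon
    push_neg at hcon
    have hβc : β < c := by linarith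
    obtain ⟨s, hcs⟩ : ∃ s : ℝ, c * s = (β + c)/2 := ⟨(β + c)/(2*c), by field_simp⟩
    have hs0 : 0 < s := by nlinarith
    have hs1 : s < 1 := by nlinarith
    have hsβ : β ≤ s := by nlinarith
    set x : ℝ := s - β with hxdef
    have hx : 0 ≤ x := by rw [hxdef]; linarith
    have hxb : x + β = s := by rw [hxdef]; ring
    have key := hne x hx
    rw [huα] at key
    unfold happyUtil2 at key
    rw [if_pos (by rw [hxb]; linarith), hxb] at key
    have key2 : x ≤ ((1-β)*(1-c) + c*x) * s := by
      rw [← div_le_iff₀ hs0] at *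
      linarith
    have e : ((1-β)*(1-c) + c*x) * s - x = (1-s) * (β - c*s) := by
      rw [hxdef]; ring
    have hneg : (1-s) * (β - c*s) < 0 :=
      mul_neg_of_pos_of_neg (by linarith) (by linarith)
    linarith


/-- For costs `0 < c₁ ≤ c₂` with `c₁ + c₂ ≤ 1`, any profile `(α, β)` with
`α + β = 1`, `(1-c₁)/2 ≤ α ≤ 1-c₁` and `(1-c₂)/2 ≤ β ≤ 1-c₂` is a Nash
equilibrium; moreover any Nash equilibrium with total hashrate `1` satisfies
these bounds. -/
theorem two_miner_equilibria_at_Q (c₁ c₂ : ℝ) (h1 : 0 < c₁) (h2 : 0 < c₂)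
    (h12 : c₁ ≤ c₂) (hsum : c₁ + c₂ ≤ 1) :
    (∀ α β : ℝ, 0 ≤ α → 0 ≤ β → α + β = 1 →
      (1 - c₁) / 2 ≤ α → α ≤ 1 - c₁ → (1 - c₂) / 2 ≤ β → β ≤ 1 - c₂ →
      (∀ x : ℝ, 0 ≤ x → happyUtil2 c₁ x β ≤ happyUtil2 c₁ α β) ∧
      (∀ y : ℝ, 0 ≤ y → happyUtil2 c₂ y α ≤ happyUtil2 c₂ β α)) ∧
    (∀ α β : ℝ, 0 ≤ α → 0 ≤ β → α + β = 1 →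
      (∀ x : ℝ, 0 ≤ x → happyUtil2 c₁ x β ≤ happyUtil2 c₁ α β) →
      (∀ y : ℝ, 0 ≤ y → happyUtil2 c₂ y α ≤ happyUtil2 c₂ β α) →
      (1 - c₁) / 2 ≤ α ∧ α ≤ 1 - c₁ ∧ (1 - c₂) / 2 ≤ β ∧ β ≤ 1 - c₂) := by
  have hc1lt : c₁ < 1 := by linarith
  have hc2lt : c₂ < 1 := by linarith
  constructor
  · intro α β hα hβ hab hα1 hα2 hβ1 hβ2
    constructor
    · have hα' : α = 1 - β := by linarith
      rw [hα']
      exact best_resp c₁ β h1 (by linarith) (by linarith) (by linarith)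
    · have hβ' : β = 1 - α := by linarith
      rw [hβ']
      exact best_resp c₂ α h2 (by linarith) (by linarith) (by linarith)
  · intro α β hα hβ hab hne1 hne2
    obtain ⟨hA1, hA2⟩ := nec c₁ α β h1 hc1lt hα hβ hab hne1
    obtain ⟨hB1, hB2⟩ := nec c₂ β α h2 hc2lt hβ hα (by linarith) hne2
    exact ⟨hA1, hA2, hB1, hB2⟩
end

section
/- Let m > δ+1 miners have uniform cost c with 0 < c < (m-δ-1)/m. Then q_i = (1/m)·((m-δ-1)/(cm))^{1/(δ+1)} for every miner is an equilibrium of HaPPY-Mine with Q = 1, and the total hashrate ((m-δ-1)/(cm))^{1/(δ+1)} exceeds 1. -/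
/-- For `m > δ+1` miners with uniform cost `0 < c < (m-δ-1)/m`, the symmetric
profile `qᵢ = (1/m)·((m-δ-1)/(cm))^(1/(δ+1))` is an equilibrium of HaPPY-Mine
with `Q = 1`: the total hashrate `((m-δ-1)/(cm))^(1/(δ+1))` exceeds `1` and
each miner's utility derivative vanishes. -/
theorem uniform_cost_high_hashrate_equilibrium (m : ℕ) (δ c : ℝ) (hδ : 0 ≤ δ)
    (hm : δ + 1 < (m : ℝ)) (hc0 : 0 < c) (hc : c < ((m : ℝ) - δ - 1) / m)
    (q H : ℝ)
    (hq : q = (1 / (m : ℝ)) * (((m : ℝ) - δ - 1) / (c * m)) ^ ((1 : ℝ) / (δ + 1)))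
    (hH : H = m * q) :
    H = (((m : ℝ) - δ - 1) / (c * m)) ^ ((1 : ℝ) / (δ + 1)) ∧ 1 < H ∧
      (H - (δ + 1) * q) / H ^ (δ + 2) - c = 0 := by
  have hm0 : (0 : ℝ) < m := by linarith
  have hmne : (m : ℝ) ≠ 0 := ne_of_gt hm0
  set A : ℝ := ((m : ℝ) - δ - 1) / (c * m) with hAdef
  have hcm : 0 < c * m := mul_pos hc0 hm0
  have hA1 : 1 < A := by
    rw [hAdef, lt_div_iff₀ hcm]
    nlinarith [(lt_div_iff₀ hm0).mp hc]
  have hA0 : 0 < A := lt_trans one_pos hA1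
  have hδ1 : 0 < δ + 1 := by linarith
  have hHA : H = A ^ ((1 : ℝ) / (δ + 1)) := by
    rw [hH, hq]; field_simp
  have hH1 : 1 < H := by
    rw [hHA]
    exact Real.one_lt_rpow_iff_of_pos hA0 |>.mpr (Or.inl ⟨hA1, by positivity⟩)
  have hH0 : 0 < H := lt_trans one_pos hH1
  refine ⟨hHA, hH1, ?_⟩
  have hHpow : H ^ (δ + 1) = A := by
    rw [hHA, ← Real.rpow_mul (le_of_lt hA0)]
    rw [show (1 : ℝ) / (δ + 1) * (δ + 1) = 1 by field_simp, Real.rpow_one]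
  have hHpow2 : H ^ (δ + 2) = H * A := by
    rw [show δ + 2 = 1 + (δ + 1) by ring, Real.rpow_add hH0, Real.rpow_one, hHpow]
  have hqH : q = H / m := by rw [hH]; field_simp
  rw [hHpow2, hqH]
  rw [div_sub' (c := H * A) (by positivity), div_eq_zero_iff]
  left
  rw [hAdef]
  field_simp
  ring
end

section
/- Suppose an equilibrium of HaPPY-Mine has total hashrate exactly Q. Then every miner with cost c_i < 1/Q participates with hashrate satisfying (Q - c_i Q²)/(δ+1) ≤ q_i ≤ Q - c_i Q², and miners with c_i ≥ 1/Q have q_i = 0. -/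
/-- At a HaPPY-Mine equilibrium with total hashrate exactly `Q`, every miner
with cost `cᵢ < 1/Q` participates with hashrate in
`[(Q - cᵢQ²)/(δ+1), Q - cᵢQ²]`, and miners with `cᵢ ≥ 1/Q` do not
participate. -/
theorem equilibrium_at_Q (m : ℕ) (Q δ : ℝ) (hQ : 0 < Q) (hδ : 0 ≤ δ)
    (c q : Fin m → ℝ) (hc : ∀ i, 0 < c i) (hq : ∀ i, 0 ≤ q i)
    (hsum : ∑ i, q i = Q)
    (hleft : ∀ i, 0 < q i → 0 ≤ (Q - q i) / Q ^ 2 - c i)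
    (hright : ∀ i, 0 < q i → (Q - (δ + 1) * q i) / Q ^ 2 - c i ≤ 0)
    (hnon : ∀ i, q i = 0 → Q / Q ^ 2 - c i ≤ 0) :
    ∀ i, (c i < 1 / Q →
            0 < q i ∧ (Q - c i * Q ^ 2) / (δ + 1) ≤ q i ∧ q i ≤ Q - c i * Q ^ 2) ∧
         (1 / Q ≤ c i → q i = 0) := by
  intro i
  have hQ2 : (0:ℝ) < Q ^ 2 := by positivity
  have hQne : Q ≠ 0 := ne_of_gt hQ
  have hQQ2 : Q / Q ^ 2 = 1 / Q := by field_simp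
  constructor
  · intro hci
    have hpos : 0 < q i := by
      rcases (hq i).lt_or_eq with h | h
      · exact h
      · exfalso
        have := hnon i h.symm
        rw [hQQ2] at this
        linarith
    refine ⟨hpos, ?_, ?_⟩
    · have h := hright i hpos
      have h1 : Q - c i * Q ^ 2 ≤ (δ + 1) * q i := by
        have := (div_le_iff₀ hQ2).mp (by linarith : (Q - (δ + 1) * q i) / Q ^ 2 ≤ c i)
        nlinarith
      rw [div_le_iff₀ (by linarith : (0:ℝ) < δ + 1)]
      linarith [mul_comm (δ + 1) (q i)]
    · have h := hleft i hpos
      have := (le_div_iff₀ hQ2).mp (by linarith : c i ≤ (Q - q i) / Q ^ 2)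
      linarith
  · intro hci
    by_contra hne
    have hpos : 0 < q i := (hq i).lt_of_ne fun h => hne h.symm
    have h := hleft i hpos
    have h2 : c i ≤ (Q - q i) / Q ^ 2 := by linarith
    have h3 : (Q - q i) / Q ^ 2 < Q / Q ^ 2 := by
      exact div_lt_div_of_pos_right (by linarith) hQ2
    rw [hQQ2] at h3
    linarith
end

section
/- In any HaPPY-Mine equilibrium with total hashrate H > Q, if miner i+1 participates (q_{i+1} > 0) then miner i also participates, where costs satisfy c_i ≤ c_{i+1}. -/
/-- In any HaPPY-Mine equilibrium with total hashrate `H > Q`, if miner `i+1`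
participates then so does miner `i` (costs being sorted `cᵢ ≤ cᵢ₊₁`). -/
theorem participation_downward_closed (m : ℕ) (Q δ : ℝ) (hQ : 0 < Q)
    (hδ : 0 ≤ δ) (c q : ℕ → ℝ)
    (hcmono : ∀ i j, i ≤ j → j < m → c i ≤ c j)
    (hcpos : ∀ i, i < m → 0 < c i)
    (hqnn : ∀ i, i < m → 0 ≤ q i)
    (H : ℝ) (hH : H = ∑ i ∈ Finset.range m, q i) (hHQ : Q < H)
    (heq : ∀ i, i < m → 0 < q i →
      (Q ^ δ / H ^ (δ + 2)) * (H - (δ + 1) * q i) - c i = 0)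
    (hineq : ∀ i, i < m → q i = 0 →
      (Q ^ δ / H ^ (δ + 2)) * (H - (δ + 1) * q i) - c i ≤ 0) :
    ∀ i, i + 1 < m → 0 < q (i + 1) → 0 < q i := by
  intro i hi1 hq1
  have hi : i < m := Nat.lt_of_succ_lt hi1
  by_contra hq
  have hq0 : q i = 0 := le_antisymm (le_of_not_gt hq) (hqnn i hi)
  have hHpos : 0 < H := lt_trans hQ hHQ
  have hK : 0 < Q ^ δ / H ^ (δ + 2) :=
    div_pos (Real.rpow_pos_of_pos hQ δ) (Real.rpow_pos_of_pos hHpos (δ + 2))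
  have h1 := hineq i hi hq0
  rw [hq0] at h1
  have h2 := heq (i + 1) hi1 hq1
  have h3 : c i ≤ c (i + 1) := hcmono i (i + 1) (Nat.le_succ i) hi1
  have hqq : 0 < (δ + 1) * q (i + 1) :=
    mul_pos (by linarith) hq1
  nlinarith [mul_pos hK hqq]
end

section
/- Suppose an equilibrium of HaPPY-Mine has total hashrate H > Q with exactly the first n miners participating (n > δ+1). Then H = (Q^δ(n-δ-1)/Σ_{i=1}^n c_i)^{1/(δ+1)}, and each participating miner has q_i = (H/(δ+1))·(1 - c_i·H^{δ+1}/Q^δ). -/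
/-- If a HaPPY-Mine equilibrium has total hashrate `H > Q` with exactly the
first `n` miners participating (`n > δ+1`), then
`H = (Q^δ (n-δ-1) / Σ_{i<n} cᵢ)^(1/(δ+1))` and each participant has
`qᵢ = (H/(δ+1)) (1 - cᵢ H^(δ+1)/Q^δ)`. -/
theorem equilibrium_above_Q_formulas (m n : ℕ) (hnm : n ≤ m) (Q δ : ℝ)
    (hQ : 0 < Q) (hδ : 0 ≤ δ) (hn : δ + 1 < (n : ℝ)) (c q : ℕ → ℝ)
    (hcpos : ∀ i, i < m → 0 < c i)
    (hpart : ∀ i, i < n → 0 < q i) (hnon : ∀ i, n ≤ i → i < m → q i = 0)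
    (H : ℝ) (hH : H = ∑ i ∈ Finset.range m, q i) (hHQ : Q < H)
    (heq : ∀ i, i < n →
      (Q ^ δ / H ^ (δ + 2)) * (H - (δ + 1) * q i) - c i = 0) :
    H = (Q ^ δ * ((n : ℝ) - δ - 1) / ∑ i ∈ Finset.range n, c i)
          ^ ((1 : ℝ) / (δ + 1)) ∧
    ∀ i, i < n → q i = (H / (δ + 1)) * (1 - c i * H ^ (δ + 1) / Q ^ δ) := by
  have hH0 : 0 < H := lt_trans hQ hHQ
  have hQδ : 0 < Q ^ δ := Real.rpow_pos_of_pos hQ δ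
  have hHδ1 : 0 < H ^ (δ + 1) := Real.rpow_pos_of_pos hH0 _
  have hHδ2 : 0 < H ^ (δ + 2) := Real.rpow_pos_of_pos hH0 _
  have hδ1 : (0:ℝ) < δ + 1 := by linarith
  have hpow : H ^ (δ + 2) = H ^ (δ + 1) * H := by
    rw [show δ + 2 = (δ + 1) + 1 by ring, Real.rpow_add hH0, Real.rpow_one]
  -- the second formula
  have hq : ∀ i, i < n → q i = (H / (δ + 1)) * (1 - c i * H ^ (δ + 1) / Q ^ δ) := by
    intro i hi
    have h := heq i hi
    have h' : Q ^ δ * (H - (δ + 1) * q i) = c i * H ^ (δ + 2) := by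
      field_simp at h
      linarith
    rw [hpow] at h'
    field_simp
    nlinarith [h']
  -- sum of q over range n equals H
  have hsumq : ∑ i ∈ Finset.range n, q i = H := by
    rw [hH]
    exact (Finset.sum_subset (Finset.range_subset_range.mpr hnm)
      (fun i hi hni => hnon i (by simpa using hni) (by simpa using hi)))
  -- sum of costs
  have hcsum : ∑ i ∈ Finset.range n, c i = Q ^ δ * ((n : ℝ) - δ - 1) / H ^ (δ + 1) := by
    have h1 : ∑ i ∈ Finset.range n, c i =
        ∑ i ∈ Finset.range n, (Q ^ δ / H ^ (δ + 2)) * (H - (δ + 1) * q i) := by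
      apply Finset.sum_congr rfl
      intro i hi
      have h := heq i (Finset.mem_range.mp hi)
      linarith
    rw [h1, ← Finset.mul_sum, Finset.sum_sub_distrib, Finset.sum_const,
      Finset.card_range, ← Finset.mul_sum, hsumq, nsmul_eq_mul, hpow]
    field_simp
    ring
  constructor
  · have hne : ((n : ℝ) - δ - 1) ≠ 0 := by linarith
    have : Q ^ δ * ((n : ℝ) - δ - 1) / ∑ i ∈ Finset.range n, c i = H ^ (δ + 1) := by
      rw [hcsum]
      field_simp
    rw [this, ← Real.rpow_mul hH0.le,
      show (δ + 1) * (1 / (δ + 1)) = 1 by field_simp, Real.rpow_one]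
  · exact hq
end

section
/- If c* > 1/Q (where X(c*) = 1) then there is no HaPPY-Mine equilibrium with total hashrate equal to Q. Specifically, letting n be the number of miners with c_i < 1/Q, the conditions X(c*) = 1 with c* > 1/Q imply (n-1)/Q < Σ_{i=1}^n c_i, while an equilibrium at total hashrate Q would require Σ_{i=1}^n c_i ≤ (n-1)/Q. -/
open Classical in
/-- If `c* > 1/Q` (where `X(c*) = 1`) then there is no HaPPY-Mine equilibrium
with total hashrate `Q`: letting `n` be the number of miners with `cᵢ < 1/Q`,
we get `(n-1)/Q < Σ_{cᵢ<1/Q} cᵢ`, whereas an equilibrium at total hashrate `Q`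
(in which exactly the miners with `cᵢ < 1/Q` participate, each with
`qᵢ ≤ Q - cᵢQ²`) would require the opposite inequality. -/
theorem no_equilibrium_at_Q_when_cstar_large (m : ℕ) (Q : ℝ) (hQ : 0 < Q)
    (cs : Fin m → ℝ) (hpos : ∀ i, 0 < cs i) (hmono : Monotone cs)
    (cstar : ℝ) (hcpos : 0 < cstar)
    (hX1 : ∑ i, max (1 - cs i / cstar) 0 = 1) (hcstar : 1 / Q < cstar) :
    (((Finset.univ.filter fun i => cs i < 1 / Q).card : ℝ) - 1) / Q
        < ∑ i ∈ Finset.univ.filter (fun i => cs i < 1 / Q), cs i ∧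
    ∀ q : Fin m → ℝ, (∀ i, 0 ≤ q i) →
      (∀ i, cs i < 1 / Q → q i ≤ Q - cs i * Q ^ 2) →
      (∀ i, 1 / Q ≤ cs i → q i = 0) →
      ∑ i, q i ≠ Q := by
  set S := Finset.univ.filter fun i => cs i < 1 / Q with hS
  have key1 : ((S.card : ℝ) - 1) / Q < ∑ i ∈ S, cs i := by
    rcases Nat.eq_zero_or_pos S.card with h0 | h1
    · have hS0 : S = ∅ := Finset.card_eq_zero.mp h0
      rw [h0, hS0]
      simp only [Finset.sum_empty, Nat.cast_zero]
      have : (0 - 1 : ℝ) / Q < 0 := by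
        apply div_neg_of_neg_of_pos <;> linarith
      linarith
    · have hsum : ∑ i ∈ S, (1 - cs i / cstar) ≤ 1 := by
        calc ∑ i ∈ S, (1 - cs i / cstar)
            = ∑ i ∈ S, max (1 - cs i / cstar) 0 := by
              apply Finset.sum_congr rfl
              intro i hi
              have hlt : cs i < cstar :=
                lt_trans ((Finset.mem_filter.mp hi).2) hcstar
              have : cs i / cstar < 1 := (div_lt_one hcpos).mpr hlt
              rw [max_eq_left]; linarith
          _ ≤ ∑ i, max (1 - cs i / cstar) 0 :=
              Finset.sum_le_sum_of_subset_of_nonneg (Finset.subset_univ S)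
                (fun i _ _ => le_max_right _ _)
          _ = 1 := hX1
      have hrw : ∑ i ∈ S, (1 - cs i / cstar)
          = (S.card : ℝ) - (∑ i ∈ S, cs i) / cstar := by
        rw [Finset.sum_sub_distrib, ← Finset.sum_div]
        simp
      rw [hrw] at hsum
      -- so (card - 1) * cstar ≤ Σ cs
      have hmul : ((S.card : ℝ) - 1) * cstar ≤ ∑ i ∈ S, cs i :=
        (le_div_iff₀ hcpos).mp (by linarith : ((S.card : ℝ) - 1) ≤ (∑ i ∈ S, cs i) / cstar)
      rcases eq_or_lt_of_le (Nat.one_le_iff_ne_zero.mpr (Nat.pos_iff_ne_zero.mp h1)) with h1' | h2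
      · -- card = 1
        have hcard : (S.card : ℝ) = 1 := by rw [← h1']; norm_num
        have hpos' : (0:ℝ) < ∑ i ∈ S, cs i :=
          Finset.sum_pos (fun i _ => hpos i) (Finset.card_pos.mp h1)
        rw [hcard]
        simpa using hpos'
      · -- card ≥ 2
        have hcard : (2:ℝ) ≤ (S.card : ℝ) := by exact_mod_cast h2
        have hc1 : (0:ℝ) < (S.card : ℝ) - 1 := by linarith
        have : ((S.card : ℝ) - 1) / Q < ((S.card : ℝ) - 1) * cstar := by
          rw [div_lt_iff₀ hQ]
          have := mul_lt_mul_of_pos_left hcstar hc1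
          calc ((S.card : ℝ) - 1) = ((S.card : ℝ) - 1) * (1/Q) * Q := by
                field_simp
            _ < ((S.card : ℝ) - 1) * cstar * Q := by
                apply mul_lt_mul_of_pos_right this hQ
        linarith
  refine ⟨key1, ?_⟩
  intro q hq0 hqle hqzero hsum
  have hQS : ∑ i ∈ S, q i = Q := by
    rw [← hsum]
    symm
    apply (Finset.sum_subset (Finset.subset_univ S) ?_).symm
    intro i _ hi
    apply hqzero
    simp only [hS, Finset.mem_filter, Finset.mem_univ, true_and] at hi
    linarith [not_lt.mp hi]
  have hle : ∑ i ∈ S, q i ≤ ∑ i ∈ S, (Q - cs i * Q ^ 2) :=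
    Finset.sum_le_sum fun i hi => hqle i ((Finset.mem_filter.mp hi).2)
  have hrw2 : ∑ i ∈ S, (Q - cs i * Q ^ 2)
      = (S.card : ℝ) * Q - (∑ i ∈ S, cs i) * Q ^ 2 := by
    rw [Finset.sum_sub_distrib, ← Finset.sum_mul]
    simp [mul_comm]
  rw [hQS, hrw2] at hle
  have hk : ((S.card : ℝ) - 1) < (∑ i ∈ S, cs i) * Q := (div_lt_iff₀ hQ).mp key1
  nlinarith [mul_lt_mul_of_pos_right hk hQ]
end

section
/- Let 0 < c† < 1/Q and δ' > δ ≥ 0 with corresponding thresholds c† < c†_new < 1/Q. Then the equilibrium hashrates H = (Q^δ/c†)^{1/(δ+1)} and H' = (Q^{δ'}/c†_new)^{1/(δ'+1)} satisfy H ≥ H'. -/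
/-- For `0 < c† < 1/Q`, `0 ≤ δ < δ'` and thresholds `c† < c†_new < 1/Q`, the
equilibrium hashrates `H = (Q^δ/c†)^(1/(δ+1))` and
`H' = (Q^{δ'}/c†_new)^(1/(δ'+1))` satisfy `H ≥ H'`. -/
theorem hashrate_monotone_in_delta (Q δ δ' cdag cdagNew : ℝ) (hQ : 0 < Q)
    (hδ : 0 ≤ δ) (hδδ' : δ < δ') (hcdag0 : 0 < cdag) (hcc : cdag < cdagNew)
    (hcdagQ : cdag < 1 / Q) (hcdagNewQ : cdagNew < 1 / Q) :
    (Q ^ δ' / cdagNew) ^ ((1 : ℝ) / (δ' + 1))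
      ≤ (Q ^ δ / cdag) ^ ((1 : ℝ) / (δ + 1)) := by
  have hδ1 : (0:ℝ) < δ + 1 := by linarith
  have hδ'1 : (0:ℝ) < δ' + 1 := by linarith
  have hcN : 0 < cdagNew := hcdag0.trans hcc
  have hQcN : Q * cdagNew < 1 := by
    have := (lt_div_iff₀ hQ).mp hcdagNewQ; nlinarith
  have ha'1 : (1:ℝ) ≤ 1 / (Q * cdagNew) := by
    rw [le_div_iff₀ (by positivity)]; linarith
  have haa' : 1 / (Q * cdagNew) ≤ 1 / (Q * cdag) := by
    apply one_div_le_one_div_of_le (by positivity)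
    nlinarith
  have hrw2 : ∀ e c : ℝ, 0 < c → 0 < e + 1 →
      (Q ^ e / c) ^ ((1:ℝ)/(e+1)) = Q * (1/(Q*c)) ^ ((1:ℝ)/(e+1)) := by
    intro e c hc he
    have h1 : Q ^ e / c = Q ^ (e + 1) * (1 / (Q * c)) := by
      rw [Real.rpow_add hQ, Real.rpow_one]
      field_simp
    rw [h1, Real.mul_rpow (by positivity) (by positivity),
        ← Real.rpow_mul hQ.le, mul_one_div_cancel he.ne', Real.rpow_one]
  rw [hrw2 δ' cdagNew hcN hδ'1, hrw2 δ cdag hcdag0 hδ1]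
  apply mul_le_mul_of_nonneg_left _ hQ.le
  calc (1/(Q*cdagNew)) ^ ((1:ℝ)/(δ'+1))
      ≤ (1/(Q*cdagNew)) ^ ((1:ℝ)/(δ+1)) :=
        Real.rpow_le_rpow_of_exponent_le ha'1
          (one_div_le_one_div_of_le hδ1 (by linarith))
    _ ≤ (1/(Q*cdag)) ^ ((1:ℝ)/(δ+1)) :=
        Real.rpow_le_rpow (by positivity) haa' (by positivity)
end

section
/- Let m miners have uniform cost c and suppose the static-reward equilibrium gives each miner utility 1/m². If k miners collude (forming one miner among m-k+1 total, with colluding per-miner utility 1/(k(m-k+1)²)), then 1/(k(m-k+1)²) ≥ 1/m² implies k ≥ m - (1/2)√(4m+1) + 1/2, and in particular k > m/2. -/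
/-- For `m` homogeneous miners with static-reward equilibrium utility `1/m²`,
if `k` miners (`2 ≤ k ≤ m`) collude so that each colluder receives
`1/(k(m-k+1)²)`, then collusion being (weakly) profitable,
`1/(k(m-k+1)²) ≥ 1/m²`, forces `k ≥ m - (1/2)√(4m+1) + 1/2`, and in
particular `k > m/2`. -/
theorem collusion_requires_majority (m k : ℕ) (hm : 2 ≤ m) (hk2 : 2 ≤ k)
    (hkm : k ≤ m)
    (hprofit : (1 : ℝ) / (m : ℝ) ^ 2
      ≤ 1 / ((k : ℝ) * ((m : ℝ) - (k : ℝ) + 1) ^ 2)) :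
    (m : ℝ) - (1 / 2) * Real.sqrt (4 * (m : ℝ) + 1) + 1 / 2 ≤ (k : ℝ) ∧
    (m : ℝ) / 2 < (k : ℝ) := by
  have hM2 : (2:ℝ) ≤ (m:ℝ) := by exact_mod_cast hm
  have hK2 : (2:ℝ) ≤ (k:ℝ) := by exact_mod_cast hk2
  have hKM : (k:ℝ) ≤ (m:ℝ) := by exact_mod_cast hkm
  set T : ℝ := (m:ℝ) - (k:ℝ) + 1 with hTdef
  have hT1 : 1 ≤ T := by simp only [hTdef]; linarith
  have hmpos : (0:ℝ) < (m:ℝ)^2 := by positivity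
  have hden : (0:ℝ) < (k:ℝ) * T^2 := by positivity
  -- from profitability: k * T^2 ≤ m^2
  have h1 : (k:ℝ) * T^2 ≤ (m:ℝ)^2 := by
    rw [div_le_div_iff₀ hmpos hden] at hprofit
    nlinarith [hprofit]
  -- integer versions
  have hTint : ∃ t : ℤ, (t:ℝ) = T ∧ (k:ℤ) + t = (m:ℤ) + 1 := by
    refine ⟨(m:ℤ) - (k:ℤ) + 1, ?_, by ring⟩
    push_cast [hTdef]; ring
  obtain ⟨t, htT, hkt⟩ := hTint
  have hKt : (k:ℤ) * t^2 ≤ (m:ℤ)^2 := by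
    have : ((k:ℤ) * t^2 : ℝ) ≤ (((m:ℤ))^2 : ℝ) := by push_cast [htT]; exact h1
    exact_mod_cast this
  have ht1 : (1:ℤ) ≤ t := by
    have : (1:ℝ) ≤ (t:ℝ) := by rw [htT]; exact hT1
    exact_mod_cast this
  have hk2' : (2:ℤ) ≤ (k:ℤ) := by exact_mod_cast hk2
  -- key: t*(t-1) ≤ m
  have hkey : t * (t - 1) ≤ (m:ℤ) := by
    by_contra h
    push_neg at h
    have h' : (m:ℤ) + 1 ≤ t * (t - 1) := h
    have hMt : t + 1 ≤ (m:ℤ) := by linarith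
    have ht3 : (3:ℤ) ≤ t := by nlinarith
    nlinarith [mul_nonneg (sub_nonneg.mpr hMt) (by linarith : (0:ℤ) ≤ t*t - t - 1 - (m:ℤ)),
      mul_pos (by linarith : (0:ℤ) < t - 1) (by linarith : (0:ℤ) < t - 1)]
  -- second conclusion: m < 2k
  have hm2k : (m:ℤ) < 2 * (k:ℤ) := by
    by_contra h
    push_neg at h
    nlinarith [hkey, hkt, hk2']
  have hconc2 : (m:ℝ)/2 < (k:ℝ) := by
    have : ((m:ℤ):ℝ) < ((2 * (k:ℤ)):ℝ) := by exact_mod_cast hm2k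
    push_cast at this; linarith
  refine ⟨?_, hconc2⟩
  -- first conclusion via sqrt
  have hsq : (2*T - 1)^2 ≤ 4*(m:ℝ) + 1 := by
    have : ((t*(t-1)):ℝ) ≤ ((m:ℤ):ℝ) := by exact_mod_cast hkey
    push_cast [htT] at this
    nlinarith [this]
  have hsqrt : 2*T - 1 ≤ Real.sqrt (4*(m:ℝ) + 1) := by
    have h4m : (0:ℝ) ≤ 4*(m:ℝ) + 1 := by linarith
    nlinarith [Real.sq_sqrt h4m, Real.sqrt_nonneg (4*(m:ℝ)+1), hsq]
  simp only [hTdef] at hsqrt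
  linarith
end
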